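/- Let G be a finite simple graph and let x, y, z be three distinct vertices such that xy and yz are edges of G (i.e., xyz is a path of length 2 in G). Then b_dR(G) ≤ deg(x) + deg(y) + deg(z) − 3 − |N(x) ∩ N(y)|. -/
import Mathlib

/-- A double Roman dominating function (DRDF) on a graph `G`: a function
`f : V → ℕ` taking values in `{0,1,2,3}` such that every vertex assigned `0`
has a neighbor assigned `3` or two distinct neighbors assigned `2`, and every
vertex assigned `1` has a neighbor assigned at least `2`. -/
def IsDRDF {V : Type*} (G : SimpleGraph V) (f : V → ℕ) : Prop :=
  (∀ v, f v ≤ 3) ∧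
  (∀ v, f v = 0 →
    (∃ w, G.Adj v w ∧ f w = 3) ∨
    (∃ w₁ w₂, G.Adj v w₁ ∧ G.Adj v w₂ ∧ w₁ ≠ w₂ ∧ f w₁ = 2 ∧ f w₂ = 2)) ∧
  (∀ v, f v = 1 → ∃ w, G.Adj v w ∧ 2 ≤ f w)

/-- The double Roman domination number `γ_dR(G)`: the minimum weight of a DRDF on `G`. -/
noncomputable def gammaDR {V : Type*} [Fintype V] (G : SimpleGraph V) : ℕ :=
  sInf {k | ∃ f : V → ℕ, IsDRDF G f ∧ ∑ v, f v = k}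

/-- The double Roman bondage number `b_dR(G)`: the minimum cardinality of a set
`B` of edges of `G` such that `γ_dR(G - B) > γ_dR(G)`. -/
noncomputable def bDR {V : Type*} [Fintype V] (G : SimpleGraph V) : ℕ :=
  sInf {k | ∃ B : Finset (Sym2 V), ↑B ⊆ G.edgeSet ∧ B.card = k ∧
    gammaDR G < gammaDR (G.deleteEdges ↑B)}

lemma gammaDR_mem {V : Type*} [Fintype V] (G : SimpleGraph V) :
    ∃ f : V → ℕ, IsDRDF G f ∧ ∑ v, f v = gammaDR G := by
  have hne : {k | ∃ f : V → ℕ, IsDRDF G f ∧ ∑ v, f v = k}.Nonempty :=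
    ⟨_, fun _ => 3, ⟨fun v => le_refl 3, fun v h => by simp at h, fun v h => by simp at h⟩, rfl⟩
  exact Nat.sInf_mem hne

lemma mem_incidenceFinset' {V : Type*} [Fintype V] [DecidableEq V] (G : SimpleGraph V)
    [DecidableRel G.Adj] (v : V) (e : Sym2 V) :
    e ∈ G.incidenceFinset v ↔ e ∈ G.incidenceSet v :=
  SimpleGraph.mem_incidenceFinset (G := G) v e

/-- If `x y z` is a path of length `2` in `G`, then
`b_dR(G) ≤ deg(x) + deg(y) + deg(z) − 3 − |N(x) ∩ N(y)|`. -/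
theorem bDR_le_of_path {V : Type*} [Fintype V] [DecidableEq V]
    (G : SimpleGraph V) [DecidableRel G.Adj] (x y z : V)
    (hxy : G.Adj x y) (hyz : G.Adj y z) (hxz : x ≠ z) :
    (bDR G : ℤ) ≤ (G.degree x : ℤ) + G.degree y + G.degree z - 3 -
      (G.neighborFinset x ∩ G.neighborFinset y).card := by
  classical
  have hxy' : x ≠ y := hxy.ne
  have hyz' : y ≠ z := hyz.ne
  set C : Finset V := G.neighborFinset x ∩ G.neighborFinset y with hCdef
  set A1 : Finset (Sym2 V) := G.incidenceFinset z with hA1def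
  set A2 : Finset (Sym2 V) := G.incidenceFinset y \ {s(x, y)} with hA2def
  set D : Finset (Sym2 V) := insert s(x, y) (C.image fun c => s(x, c)) with hDdef
  set A3 : Finset (Sym2 V) := G.incidenceFinset x \ D with hA3def
  set B : Finset (Sym2 V) := A1 ∪ A2 ∪ A3 with hBdef
  set H : SimpleGraph V := G.deleteEdges (↑B : Set (Sym2 V)) with hHdef
  -- common neighbors are adjacent to y
  have hCy : ∀ c ∈ C, G.Adj y c := by
    intro c hc
    rw [hCdef, Finset.mem_inter] at hc
    exact (G.mem_neighborFinset y c).1 hc.2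
  -- adjacency in H
  have hadjH : ∀ v w, H.Adj v w → G.Adj v w ∧ s(v, w) ∉ B := by
    intro v w h
    rw [hHdef, SimpleGraph.deleteEdges_adj] at h
    exact ⟨h.1, fun hb => h.2 (Finset.mem_coe.2 hb)⟩
  have hzH : ∀ w, ¬ H.Adj z w := by
    intro w h
    obtain ⟨hG, hB⟩ := hadjH z w h
    exact hB (Finset.mem_union_left _ (Finset.mem_union_left _
      ((mem_incidenceFinset' G _ _).2 (G.mk'_mem_incidenceSet_left_iff.2 hG))))
  have hyH : ∀ w, H.Adj y w → w = x := by
    intro w h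
    obtain ⟨hG, hB⟩ := hadjH y w h
    have h2 : s(y, w) ∉ A2 := fun hh => hB (Finset.mem_union_left _ (Finset.mem_union_right _ hh))
    have hin : s(y, w) ∈ G.incidenceFinset y :=
      (mem_incidenceFinset' G _ _).2 (G.mk'_mem_incidenceSet_left_iff.2 hG)
    have : s(y, w) ∈ ({s(x, y)} : Finset (Sym2 V)) := by
      by_contra hns
      exact h2 (Finset.mem_sdiff.2 ⟨hin, hns⟩)
    rw [Finset.mem_singleton, Sym2.eq_iff] at this
    rcases this with ⟨h1, _⟩ | ⟨_, h2'⟩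
    · exact absurd h1.symm hxy'
    · exact h2'
  have hxH : ∀ w, H.Adj x w → w = y ∨ w ∈ C := by
    intro w h
    obtain ⟨hG, hB⟩ := hadjH x w h
    have h3 : s(x, w) ∉ A3 := fun hh => hB (Finset.mem_union_right _ hh)
    have hin : s(x, w) ∈ G.incidenceFinset x :=
      (mem_incidenceFinset' G _ _).2 (G.mk'_mem_incidenceSet_left_iff.2 hG)
    have hD : s(x, w) ∈ D := by
      by_contra hns
      exact h3 (Finset.mem_sdiff.2 ⟨hin, hns⟩)
    rw [hDdef, Finset.mem_insert] at hD
    rcases hD with heq | hmem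
    · rw [Sym2.eq_iff] at heq
      rcases heq with ⟨_, h2'⟩ | ⟨h1, _⟩
      · exact Or.inl h2'
      · exact absurd h1 hxy'
    · rw [Finset.mem_image] at hmem
      obtain ⟨c, hc, hceq⟩ := hmem
      rw [Sym2.eq_iff] at hceq
      rcases hceq with ⟨_, h2'⟩ | ⟨h1, h2'⟩
      · exact Or.inr (h2' ▸ hc)
      · -- c = x, impossible since c ∈ C means G.Adj x c
        exfalso
        rw [hCdef, Finset.mem_inter] at hc
        have := (G.mem_neighborFinset x c).1 hc.1
        exact this.ne h2'.symm
  -- get an optimal DRDF on H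
  obtain ⟨f, ⟨hf3, hf0, hf1⟩, hfsum⟩ := gammaDR_mem H
  -- basic forced values
  have hfz : 2 ≤ f z := by
    by_contra h
    have : f z = 0 ∨ f z = 1 := by omega
    rcases this with h0 | h1
    · rcases hf0 z h0 with ⟨w, hw, _⟩ | ⟨w₁, w₂, hw₁, _, _, _, _⟩
      · exact hzH w hw
      · exact hzH w₁ hw₁
    · obtain ⟨w, hw, _⟩ := hf1 z h1
      exact hzH w hw
  have hfy0 : f y = 0 → f x = 3 := by
    intro h0
    rcases hf0 y h0 with ⟨w, hw, hw3⟩ | ⟨w₁, w₂, hw₁, hw₂, hne, _, _⟩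
    · rwa [hyH w hw] at hw3
    · exact absurd ((hyH w₁ hw₁).trans (hyH w₂ hw₂).symm) hne
  have hfy1 : f y = 1 → 2 ≤ f x := by
    intro h1
    obtain ⟨w, hw, hw2⟩ := hf1 y h1
    rwa [hyH w hw] at hw2
  have h4 : 4 ≤ f x + f y + f z := by
    by_cases h0 : f y = 0
    · have := hfy0 h0; omega
    by_cases h1 : f y = 1
    · have := hfy1 h1; omega
    · omega
  -- the modified function on G
  set g : V → ℕ := fun v => if v = x then 0 else if v = y then 3 else if v = z then 0 else f v
    with hgdef
  have hgx : g x = 0 := by simp [hgdef]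
  have hgy : g y = 3 := by simp [hgdef, hxy'.symm]
  have hgz : g z = 0 := by
    have hzx : z ≠ x := hxz.symm
    have hzy : z ≠ y := hyz'.symm
    simp [hgdef, hzx, hzy]
  have hgother : ∀ v, v ≠ x → v ≠ y → v ≠ z → g v = f v := by
    intro v h1 h2 h3; simp [hgdef, h1, h2, h3]
  -- repair lemma for witnesses
  have claim1 : ∀ v w, v ≠ y → H.Adj v w →
      (∃ u, G.Adj v u ∧ g u = 3) ∨ (G.Adj v w ∧ g w = f w) := by
    intro v w hvy h
    by_cases hwx : w = x
    · rw [hwx] at h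
      rcases hxH v h.symm with hvy' | hvC
      · exact absurd hvy' hvy
      · exact Or.inl ⟨y, (hCy v hvC).symm, hgy⟩
    by_cases hwz : w = z
    · rw [hwz] at h
      exact absurd h.symm (hzH v)
    by_cases hwy : w = y
    · rw [hwy] at h
      exact Or.inl ⟨y, (hadjH v y h).1, hgy⟩
    · exact Or.inr ⟨(hadjH v w h).1, hgother w hwx hwy hwz⟩
  -- g is a DRDF on G
  have hgDRDF : IsDRDF G g := by
    refine ⟨?_, ?_, ?_⟩
    · intro v
      simp only [hgdef]
      split_ifs with h1 h2 h3
      · omega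
      · omega
      · omega
      · exact hf3 v
    · intro v hv
      rcases eq_or_ne v x with rfl | hvx
      · exact Or.inl ⟨y, hxy, hgy⟩
      rcases eq_or_ne v y with rfl | hvy
      · rw [hgy] at hv; omega
      rcases eq_or_ne v z with rfl | hvz
      · exact Or.inl ⟨y, hyz.symm, hgy⟩
      rw [hgother v hvx hvy hvz] at hv
      rcases hf0 v hv with ⟨w, hw, hw3⟩ | ⟨w₁, w₂, hw₁, hw₂, hne, hv1, hv2⟩
      · rcases claim1 v w hvy hw with ⟨u, hu, hu3⟩ | ⟨hadj, hgw⟩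
        · exact Or.inl ⟨u, hu, hu3⟩
        · exact Or.inl ⟨w, hadj, by rw [hgw]; exact hw3⟩
      · rcases claim1 v w₁ hvy hw₁ with ⟨u, hu, hu3⟩ | ⟨hadj₁, hgw₁⟩
        · exact Or.inl ⟨u, hu, hu3⟩
        rcases claim1 v w₂ hvy hw₂ with ⟨u, hu, hu3⟩ | ⟨hadj₂, hgw₂⟩
        · exact Or.inl ⟨u, hu, hu3⟩
        · exact Or.inr ⟨w₁, w₂, hadj₁, hadj₂, hne,
            by rw [hgw₁]; exact hv1, by rw [hgw₂]; exact hv2⟩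
    · intro v hv
      rcases eq_or_ne v x with rfl | hvx
      · rw [hgx] at hv; omega
      rcases eq_or_ne v y with rfl | hvy
      · rw [hgy] at hv; omega
      rcases eq_or_ne v z with rfl | hvz
      · rw [hgz] at hv; omega
      rw [hgother v hvx hvy hvz] at hv
      obtain ⟨w, hw, hw2⟩ := hf1 v hv
      rcases claim1 v w hvy hw with ⟨u, hu, hu3⟩ | ⟨hadj, hgw⟩
      · exact ⟨u, hu, by omega⟩
      · exact ⟨w, hadj, by rw [hgw]; exact hw2⟩
  -- sum comparison
  have hxnot : x ∉ ({y, z} : Finset V) := by simp [hxy', hxz]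
  have hynot : y ∉ ({z} : Finset V) := by simp [hyz']
  have hsumval : ∀ h : V → ℕ, ∑ v ∈ ({x, y, z} : Finset V), h v = h x + h y + h z := by
    intro h
    rw [show ({x, y, z} : Finset V) = insert x (insert y {z}) from rfl,
      Finset.sum_insert hxnot, Finset.sum_insert hynot, Finset.sum_singleton]
    ring
  have hsplit : ∀ h : V → ℕ, ∑ v, h v
      = ∑ v ∈ Finset.univ \ ({x, y, z} : Finset V), h v + ∑ v ∈ ({x, y, z} : Finset V), h v :=
    fun h => (Finset.sum_sdiff (Finset.subset_univ _)).symm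
  have hgf_eq : ∑ v ∈ Finset.univ \ ({x, y, z} : Finset V), g v
      = ∑ v ∈ Finset.univ \ ({x, y, z} : Finset V), f v := by
    refine Finset.sum_congr rfl ?_
    intro v hv
    rw [Finset.mem_sdiff, Finset.mem_insert, Finset.mem_insert, Finset.mem_singleton] at hv
    push_neg at hv
    exact hgother v hv.2.1 hv.2.2.1 hv.2.2.2
  have hsum_lt : ∑ v, g v < ∑ v, f v := by
    rw [hsplit g, hsplit f, hgf_eq, hsumval g, hsumval f, hgx, hgy, hgz]
    omega
  -- gammaDR G < gammaDR H
  have hlt : gammaDR G < gammaDR H := by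
    have h1 : gammaDR G ≤ ∑ v, g v := Nat.sInf_le ⟨g, hgDRDF, rfl⟩
    omega
  -- B consists of edges of G
  have hBedge : (↑B : Set (Sym2 V)) ⊆ G.edgeSet := by
    intro e he
    rw [Finset.mem_coe, hBdef, Finset.mem_union, Finset.mem_union] at he
    rcases he with (h | h) | h
    · exact G.incidenceSet_subset z ((mem_incidenceFinset' G _ e).1 h)
    · exact G.incidenceSet_subset y ((mem_incidenceFinset' G _ e).1 (Finset.mem_sdiff.1 h).1)
    · exact G.incidenceSet_subset x ((mem_incidenceFinset' G _ e).1 (Finset.mem_sdiff.1 h).1)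
  have hbd : bDR G ≤ B.card := Nat.sInf_le ⟨B, hBedge, rfl, hlt⟩
  -- counting
  have hexy_ne_eyz : s(x, y) ≠ s(y, z) := by
    rw [Ne, Sym2.eq_iff]
    push_neg
    constructor
    · intro h; exact absurd h hxy'
    · intro h; exact absurd h hxz
  have hTsub : ({s(x, y), s(y, z)} : Finset (Sym2 V)) ⊆ G.incidenceFinset y := by
    intro e he
    rw [Finset.mem_insert, Finset.mem_singleton] at he
    rcases he with rfl | rfl
    · exact (mem_incidenceFinset' G _ _).2 (G.mk'_mem_incidenceSet_right_iff.2 hxy)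
    · exact (mem_incidenceFinset' G _ _).2 (G.mk'_mem_incidenceSet_left_iff.2 hyz)
  have hTcard : ({s(x, y), s(y, z)} : Finset (Sym2 V)).card = 2 := by
    rw [Finset.card_insert_of_notMem (by simpa using hexy_ne_eyz), Finset.card_singleton]
  have hDsub : D ⊆ G.incidenceFinset x := by
    intro e he
    rw [hDdef, Finset.mem_insert] at he
    rcases he with rfl | he
    · exact (mem_incidenceFinset' G _ _).2 (G.mk'_mem_incidenceSet_left_iff.2 hxy)
    · rw [Finset.mem_image] at he
      obtain ⟨c, hc, rfl⟩ := he
      rw [hCdef, Finset.mem_inter] at hc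
      have : G.Adj x c := (G.mem_neighborFinset x c).1 hc.1
      exact (mem_incidenceFinset' G _ _).2 (G.mk'_mem_incidenceSet_left_iff.2 this)
  have himg_card : (C.image fun c => s(x, c)).card = C.card := by
    rw [Finset.card_image_of_injOn]
    intro c hc c' hc' heq
    rw [Sym2.eq_iff] at heq
    rcases heq with ⟨_, h2⟩ | ⟨h1, h2⟩
    · exact h2
    · exfalso
      rw [Finset.mem_coe, hCdef, Finset.mem_inter] at hc
      have := (G.mem_neighborFinset x c).1 hc.1
      exact this.ne h2.symm
  have hDcard : D.card = 1 + C.card := by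
    rw [hDdef, Finset.card_insert_of_notMem, himg_card]
    · omega
    · rw [Finset.mem_image]
      rintro ⟨c, hc, heq⟩
      rw [Sym2.eq_iff] at heq
      rcases heq with ⟨_, h2⟩ | ⟨h1, _⟩
      · rw [hCdef, Finset.mem_inter] at hc
        have := (G.mem_neighborFinset y c).1 hc.2
        exact this.ne h2.symm
      · exact hxy' h1
  have hA1card : A1.card = G.degree z := SimpleGraph.card_incidenceFinset_eq_degree (G := G) z
  have hA2'card : (G.incidenceFinset y \ {s(x, y), s(y, z)}).card = G.degree y - 2 := by
    rw [Finset.card_sdiff_of_subset hTsub, hTcard, SimpleGraph.card_incidenceFinset_eq_degree]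
  have hA3card : A3.card = G.degree x - (1 + C.card) := by
    rw [hA3def, Finset.card_sdiff_of_subset hDsub, hDcard, SimpleGraph.card_incidenceFinset_eq_degree]
  have h2dy : 2 ≤ G.degree y := by
    have := Finset.card_le_card hTsub
    rwa [hTcard, SimpleGraph.card_incidenceFinset_eq_degree] at this
  have h1dx : 1 + C.card ≤ G.degree x := by
    have := Finset.card_le_card hDsub
    rwa [hDcard, SimpleGraph.card_incidenceFinset_eq_degree] at this
  have hBsub2 : B ⊆ A1 ∪ (G.incidenceFinset y \ {s(x, y), s(y, z)}) ∪ A3 := by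
    intro e he
    rw [hBdef, Finset.mem_union, Finset.mem_union] at he
    rw [Finset.mem_union, Finset.mem_union]
    rcases he with (h | h) | h
    · exact Or.inl (Or.inl h)
    · -- e ∈ A2; either e = s(y,z) (then e ∈ A1) or e ∈ the smaller sdiff
      rw [hA2def, Finset.mem_sdiff, Finset.mem_singleton] at h
      by_cases heyz : e = s(y, z)
      · refine Or.inl (Or.inl ?_)
        rw [heyz]
        exact (mem_incidenceFinset' G _ _).2 (G.mk'_mem_incidenceSet_right_iff.2 hyz)
      · refine Or.inl (Or.inr ?_)
        rw [Finset.mem_sdiff, Finset.mem_insert, Finset.mem_singleton]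
        exact ⟨h.1, by push_neg; exact ⟨h.2, heyz⟩⟩
    · exact Or.inr h
  have hBcard : B.card ≤ G.degree z + (G.degree y - 2) + (G.degree x - (1 + C.card)) := by
    calc B.card ≤ (A1 ∪ (G.incidenceFinset y \ {s(x, y), s(y, z)}) ∪ A3).card :=
          Finset.card_le_card hBsub2
      _ ≤ (A1 ∪ (G.incidenceFinset y \ {s(x, y), s(y, z)})).card + A3.card :=
          Finset.card_union_le _ _
      _ ≤ A1.card + (G.incidenceFinset y \ {s(x, y), s(y, z)}).card + A3.card := by
          have := Finset.card_union_le A1 (G.incidenceFinset y \ {s(x, y), s(y, z)})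
          omega
      _ = G.degree z + (G.degree y - 2) + (G.degree x - (1 + C.card)) := by
          rw [hA1card, hA2'card, hA3card]
  omega
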